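/- Let N be a natural number, A : Fin N → Fin N → ℝ a symmetric matrix, and suppose: (i) there exists W : Fin N → ℝ² (Euclidean inner product space) such that for all i ≠ j, A i j > 0 if and only if ⟪W i, W j⟫ > 0 (A has a rank-2 sign representation); and (ii) every node is non-isolated, i.e., for every i there exists j ≠ i with A i j > 0 (implied by connectedness of the graph). Then for every real number x ≠ 0 there exists k : Fin N → ℝ such that for all i ≠ j, A i j > 0 if and only if cos((k i − k j)·x) > 0. -/

import Mathlib

open scoped RealInnerProductSpace

theorem rank_two_graphs_trig_representable
    (N : ℕ) (A : Fin N → Fin N → ℝ)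
    (hsymm : ∀ i j, A i j = A j i)
    (W : Fin N → EuclideanSpace ℝ (Fin 2))
    (hrep : ∀ i j, i ≠ j → (A i j > 0 ↔ ⟪W i, W j⟫ > 0))
    (hconn : ∀ i, ∃ j, j ≠ i ∧ A i j > 0)
    (x : ℝ) (hx : x ≠ 0) :
    ∃ k : Fin N → ℝ, ∀ i j, i ≠ j →
      (A i j > 0 ↔ Real.cos ((k i - k j) * x) > 0) := by
  set z : Fin N → ℂ := fun i => ⟨W i 0, W i 1⟩ with hz
  have hWz : ∀ i, W i ≠ 0 → z i ≠ 0 := by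
    intro i hWi hzi
    apply hWi
    have h0 : W i 0 = 0 := congrArg Complex.re hzi
    have h1 : W i 1 = 0 := congrArg Complex.im hzi
    ext t
    fin_cases t <;> simpa
  have hWne : ∀ i, W i ≠ 0 := by
    intro i hWi
    obtain ⟨j, hji, hA⟩ := hconn i
    have := (hrep i j hji.symm).mp hA
    rw [hWi, inner_zero_left] at this
    exact lt_irrefl 0 this
  have hzne : ∀ i, z i ≠ 0 := fun i => hWz i (hWne i)
  refine ⟨fun i => Complex.arg (z i) / x, ?_⟩
  intro i j hij
  have harg : (Complex.arg (z i) / x - Complex.arg (z j) / x) * x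
      = Complex.arg (z i) - Complex.arg (z j) := by field_simp
  rw [harg, Real.cos_sub]
  rw [Complex.cos_arg (hzne i), Complex.cos_arg (hzne j),
      Complex.sin_arg, Complex.sin_arg]
  have hinner : ⟪W i, W j⟫ = W i 0 * W j 0 + W i 1 * W j 1 := by
    simp [PiLp.inner_apply, Fin.sum_univ_two, RCLike.inner_apply]; ring
  have hai : 0 < ‖z i‖ := norm_pos_iff.mpr (hzne i)
  have haj : 0 < ‖z j‖ := norm_pos_iff.mpr (hzne j)
  have hre_i : (z i).re = W i 0 := rfl
  have hre_j : (z j).re = W j 0 := rfl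
  have him_i : (z i).im = W i 1 := rfl
  have him_j : (z j).im = W j 1 := rfl
  rw [hrep i j hij, hinner]
  have hcalc : (z i).re / ‖z i‖ * ((z j).re / ‖z j‖)
      + (z i).im / ‖z i‖ * ((z j).im / ‖z j‖)
      = (W i 0 * W j 0 + W i 1 * W j 1) / (‖z i‖ * ‖z j‖) := by
    rw [hre_i, hre_j, him_i, him_j]; field_simp
  rw [hcalc]
  constructor
  · intro h; exact div_pos h (mul_pos hai haj)
  · intro h
    have := mul_pos h (mul_pos hai haj)
    rwa [div_mul_cancel₀] at this
    exact (mul_pos hai haj).ne'
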